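/- Let Q ∈ ℝ^{I×ℓ} have orthonormal columns and let P ∈ ℝ^{I×ℓ} consist of ℓ distinct columns of the I×I identity matrix such that PᵀQ is invertible, and set Π = Q(PᵀQ)⁻¹Pᵀ. Then the spectral norm of Π satisfies ‖Π‖₂ = ‖(PᵀQ)⁻¹‖₂. -/

import Mathlib

open MeasureTheory ProbabilityTheory BigOperators Matrix

noncomputable section

/-- A `d`-mode tensor with dimensions `I 0 × ⋯ × I (d-1)`. -/
abbrev Tensor (d : ℕ) (I : Fin d → ℕ) : Type := (∀ j, Fin (I j)) → ℝ

namespace Tensor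

variable {d : ℕ} {I J : Fin d → ℕ}

/-- Square of the Frobenius norm of a tensor. -/
def frobSq (X : Tensor d I) : ℝ := ∑ i, (X i) ^ 2

/-- Frobenius norm of a tensor. -/
def frobNorm (X : Tensor d I) : ℝ := Real.sqrt (frobSq X)

/-- Mode-`j` product of a tensor with a square matrix `A ∈ ℝ^{I_j × I_j}`. -/
def modeMul (X : Tensor d I) (j : Fin d) (A : Matrix (Fin (I j)) (Fin (I j)) ℝ) :
    Tensor d I :=
  fun i => ∑ k, A (i j) k * X (Function.update i j k)

/-- `modeMulFirst X A t = X ×₁ A₁ ×₂ A₂ ⋯ ×ₜ Aₜ` (the first `t` modes, square matrices). -/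
def modeMulFirst (X : Tensor d I) (A : ∀ j, Matrix (Fin (I j)) (Fin (I j)) ℝ) : ℕ → Tensor d I
  | 0 => X
  | t + 1 =>
    if h : t < d then modeMul (modeMulFirst X A t) ⟨t, h⟩ (A ⟨t, h⟩)
    else modeMulFirst X A t

/-- Simultaneous mode product in every mode: `multiMul G A = G ×₁ A₁ ⋯ ×_d A_d`,
where `A j ∈ ℝ^{I_j × J_j}` and `G` has dimensions `J`. -/
def multiMul (G : Tensor d J) (A : ∀ j, Matrix (Fin (I j)) (Fin (J j)) ℝ) : Tensor d I :=
  fun i => ∑ k : ∀ j, Fin (J j), (∏ j, A j (i j) (k j)) * G k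

/-- Mode-`j` unfolding of a tensor, as a matrix with rows indexed by `Fin (I j)` and
columns indexed by the remaining modes. -/
def unfold (X : Tensor d I) (j : Fin d) :
    Matrix (Fin (I j)) (∀ k : {k : Fin d // k ≠ j}, Fin (I k.1)) ℝ :=
  Matrix.of fun a b => X fun k => if h : k = j then Fin.cast (congrArg I h.symm) a else b ⟨k, h⟩

end Tensor

/-- `singularValues A i` is the `(i+1)`-st largest singular value of `A`
(0-based indexing; `0` when `i` exceeds the number of rows). -/
def singularValues {m n : Type*} [Fintype m] [Fintype n] [DecidableEq m]
    (A : Matrix m n ℝ) : ℕ → ℝ := fun i =>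
  if h : i < Fintype.card m then
    let ev : Fin (Fintype.card m) → ℝ :=
      (Matrix.isHermitian_mul_conjTranspose_self A).eigenvalues ∘ (Fintype.equivFin m).symm
    Real.sqrt ((ev ∘ Tuple.sort ev) ⟨Fintype.card m - 1 - i, by omega⟩)
  else 0

/-- Spectral norm (largest singular value). -/
def specNorm {m n : Type*} [Fintype m] [Fintype n] [DecidableEq m]
    (A : Matrix m n ℝ) : ℝ := singularValues A 0

/-- Square of the Frobenius norm of a matrix. -/
def matFrobSq {m n : Type*} [Fintype m] [Fintype n] (M : Matrix m n ℝ) : ℝ :=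
  ∑ i, ∑ j, (M i j) ^ 2

/-- Frobenius norm of a matrix. -/
def matFrobNorm {m n : Type*} [Fintype m] [Fintype n] (M : Matrix m n ℝ) : ℝ :=
  Real.sqrt (matFrobSq M)

/-- A rectangular "diagonal" matrix with entries `s 0, s 1, …` placed along the diagonal
determined by the chosen enumerations of the index types. -/
def diagMat (m n : Type*) [Fintype m] [Fintype n] (s : ℕ → ℝ) : Matrix m n ℝ :=
  Matrix.of fun a b =>
    if (Fintype.equivFin m a : ℕ) = (Fintype.equivFin n b : ℕ) then s (Fintype.equivFin m a)
    else 0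

/-- `IsSVD M U s V` : `M = U Σ Vᵀ` is a singular value decomposition of `M`, with `U, V`
orthogonal and the singular values `s` nonnegative and arranged in decreasing order. -/
def IsSVD {m n : Type*} [Fintype m] [Fintype n] [DecidableEq m] [DecidableEq n]
    (M : Matrix m n ℝ) (U : Matrix m m ℝ) (s : ℕ → ℝ) (V : Matrix n n ℝ) : Prop :=
  Uᵀ * U = 1 ∧ Vᵀ * V = 1 ∧ Antitone s ∧ (∀ i, 0 ≤ s i) ∧
    (∀ i, min (Fintype.card m) (Fintype.card n) ≤ i → s i = 0) ∧
    M = U * diagMat m n s * Vᵀ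

/-- `B` is the rank-`r` truncated SVD of `M`: it is obtained from an SVD of `M` by
retaining only the `r` largest singular values. -/
def IsSVDTruncation {m n : Type*} [Fintype m] [Fintype n] [DecidableEq m] [DecidableEq n]
    (M : Matrix m n ℝ) (r : ℕ) (B : Matrix m n ℝ) : Prop :=
  ∃ U s V, IsSVD M U s V ∧ B = U * diagMat m n (fun i => if i < r then s i else 0) * Vᵀ

/-- `A` consists of the first `r` left singular vectors of `M` (the columns of the
orthogonal factor `U` of an SVD of `M` corresponding to the `r` largest singular values). -/
def IsTopLeftSingVecs {m n : Type*} [Fintype m] [Fintype n] [DecidableEq m] [DecidableEq n]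
    (M : Matrix m n ℝ) (r : ℕ) (A : Matrix m (Fin r) ℝ) : Prop :=
  ∃ U s V, IsSVD M U s V ∧ ∃ h : r ≤ Fintype.card m,
    ∀ (a : m) (k : Fin r), A a k = U a ((Fintype.equivFin m).symm (Fin.castLE h k))

/-- Column space of a matrix. -/
def colSpace {m n : Type*} [Fintype n] (M : Matrix m n ℝ) : Submodule ℝ (m → ℝ) :=
  LinearMap.range M.mulVecLin

/-- `Xopt` is a best multilinear rank-`r` approximation of `X` in the Frobenius norm. -/
def IsBestRankApprox {d : ℕ} {I : Fin d → ℕ} (X : Tensor d I) (r : Fin d → ℕ)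
    (Xopt : Tensor d I) : Prop :=
  (∀ j, (Tensor.unfold Xopt j).rank ≤ r j) ∧
    ∀ Y : Tensor d I, (∀ j, (Tensor.unfold Y j).rank ≤ r j) →
      Tensor.frobNorm (X - Xopt) ≤ Tensor.frobNorm (X - Y)

/-- `P` is a selection operator: its columns are distinct columns of the identity matrix. -/
def IsSelection {a b : Type*} [DecidableEq a] (P : Matrix a b ℝ) : Prop :=
  ∃ f : b → a, Function.Injective f ∧ ∀ i k, P i k = if i = f k then 1 else 0

section STHOSVD

variable {d : ℕ}

/-- Dimensions of the partially truncated core tensor in the STHOSVD with processing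
order `[0, 1, …, d-1]`: after processing the first `t` modes, mode `k` has dimension
`r k` for `k < t` and `I k` otherwise. -/
def stDims (I r : Fin d → ℕ) (t : ℕ) : Fin d → ℕ := fun k => if (k : ℕ) < t then r k else I k

theorem stDims_lt {I r : Fin d → ℕ} {t : ℕ} {k : Fin d} (h : (k : ℕ) < t) :
    stDims I r t k = r k := if_pos h

theorem stDims_ge {I r : Fin d → ℕ} {t : ℕ} {k : Fin d} (h : ¬ (k : ℕ) < t) :
    stDims I r t k = I k := if_neg h

theorem stDims_self {I r : Fin d → ℕ} (j : Fin d) : stDims I r (j : ℕ) j = I j :=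
  stDims_ge (lt_irrefl _)

/-- The partially truncated core tensor `G^{(t)} = X ×₁ A₁ᵀ ⋯ ×ₜ Aₜᵀ` of the STHOSVD
(processing order `[0, …, d-1]`). -/
def stCore {I r : Fin d → ℕ} (X : Tensor d I)
    (A : ∀ j, Matrix (Fin (I j)) (Fin (r j)) ℝ) (t : ℕ) : Tensor d (stDims I r t) :=
  Tensor.multiMul X fun k =>
    if h : (k : ℕ) < t then
      Matrix.reindex (finCongr (stDims_lt h).symm) (Equiv.refl _) (A k)ᵀ
    else Matrix.reindex (finCongr (stDims_ge h).symm) (Equiv.refl _)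
      (1 : Matrix (Fin (I k)) (Fin (I k)) ℝ)

/-- The `t`-th partial approximation `X̂^{(t)} = G^{(t)} ×₁ A₁ ⋯ ×ₜ Aₜ` of the STHOSVD. -/
def stPartial {I r : Fin d → ℕ} (X : Tensor d I)
    (A : ∀ j, Matrix (Fin (I j)) (Fin (r j)) ℝ) (t : ℕ) : Tensor d I :=
  Tensor.multiMul (stCore X A t) fun k =>
    if h : (k : ℕ) < t then
      Matrix.reindex (Equiv.refl _) (finCongr (stDims_lt h).symm) (A k)
    else Matrix.reindex (Equiv.refl _) (finCongr (stDims_ge h).symm)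
      (1 : Matrix (Fin (I k)) (Fin (I k)) ℝ)

/-- Column index type for the mode-`j` unfolding of a tensor with dimensions `I`. -/
abbrev colIdx (I : Fin d → ℕ) (j : Fin d) : Type := ∀ k : {k : Fin d // k ≠ j}, Fin (I k.1)

end STHOSVD

/-- Measurable space structure on matrices (entrywise). -/
instance matrixMeasurableSpace (m n : Type*) : MeasurableSpace (Matrix m n ℝ) :=
  inferInstanceAs (MeasurableSpace (m → n → ℝ))

/-- The distribution of a standard Gaussian random matrix: independent `N(0,1)` entries. -/
def gaussMat (m n : Type*) [Fintype m] [Fintype n] : Measure (Matrix m n ℝ) :=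
  (Measure.pi fun _ : m => Measure.pi fun _ : n => gaussianReal 0 1 :
    Measure (m → n → ℝ))

end

noncomputable section

/-- The structure-preserving STHOSVD approximation `X̂ = G^{(d)} ×₁ A₁ ⋯ ×_d A_d`, where
the core `G^{(d)} = X ×₁ P₁ᵀ ⋯ ×_d P_dᵀ` is built from the selection operators `P j` and
the (not necessarily orthonormal) factor matrices are `A j`. -/
def spApprox {d : ℕ} {I L : Fin d → ℕ} (X : Tensor d I)
    (P : ∀ j, Matrix (Fin (I j)) (Fin (L j)) ℝ)
    (A : ∀ j, Matrix (Fin (I j)) (Fin (L j)) ℝ) : Tensor d I :=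
  Tensor.multiMul (stCore X P d) fun k =>
    Matrix.reindex (Equiv.refl _) (finCongr (stDims_lt k.isLt).symm) (A k)

end

section ObliqueHelpers
open Matrix

variable {m' n' : Type*} [Fintype m'] [Fintype n']

private lemma obl_dot_AAt (A : Matrix m' n' ℝ) (x : m' → ℝ) :
    x ⬝ᵥ (A * Aᵀ) *ᵥ x = (Aᵀ *ᵥ x) ⬝ᵥ (Aᵀ *ᵥ x) := by
  rw [← mulVec_mulVec, dotProduct_mulVec, ← mulVec_transpose]

private lemma obl_conj_dot (A : Matrix m' n' ℝ) (M : Matrix n' n' ℝ) (x : m' → ℝ) :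
    x ⬝ᵥ (A * M * Aᵀ) *ᵥ x = (Aᵀ *ᵥ x) ⬝ᵥ M *ᵥ (Aᵀ *ᵥ x) := by
  rw [← mulVec_mulVec, ← mulVec_mulVec, dotProduct_mulVec, ← mulVec_transpose]

private lemma obl_dot_mulVec_self (A : Matrix m' n' ℝ) (v : n' → ℝ) :
    (A *ᵥ v) ⬝ᵥ (A *ᵥ v) = v ⬝ᵥ (Aᵀ * A) *ᵥ v := by
  rw [← mulVec_mulVec, dotProduct_mulVec, ← mulVec_transpose, mulVec_mulVec]
  exact dotProduct_comm _ _

private lemma obl_dot_self_nonneg (x : m' → ℝ) : 0 ≤ x ⬝ᵥ x :=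
  Finset.sum_nonneg fun _ _ => mul_self_nonneg _

private lemma obl_sel_contract {I ℓ : ℕ} (Q : Matrix (Fin I) (Fin ℓ) ℝ)
    (hQ : Qᵀ * Q = 1) (x : Fin I → ℝ) :
    (Qᵀ *ᵥ x) ⬝ᵥ (Qᵀ *ᵥ x) ≤ x ⬝ᵥ x := by
  set z := Qᵀ *ᵥ x with hz
  have h1 : x ⬝ᵥ (Q *ᵥ z) = z ⬝ᵥ z := by
    rw [dotProduct_mulVec, ← mulVec_transpose, ← hz]
  have h2 : (Q *ᵥ z) ⬝ᵥ (Q *ᵥ z) = z ⬝ᵥ z := by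
    rw [obl_dot_mulVec_self, hQ, one_mulVec]
  have h3 : 0 ≤ (x - Q *ᵥ z) ⬝ᵥ (x - Q *ᵥ z) := obl_dot_self_nonneg _
  have h4 : (x - Q *ᵥ z) ⬝ᵥ (x - Q *ᵥ z)
      = x ⬝ᵥ x - (Q *ᵥ z) ⬝ᵥ x - (x ⬝ᵥ (Q *ᵥ z) - (Q *ᵥ z) ⬝ᵥ (Q *ᵥ z)) := by
    rw [dotProduct_sub, sub_dotProduct, sub_dotProduct]
  have h5 : (Q *ᵥ z) ⬝ᵥ x = x ⬝ᵥ (Q *ᵥ z) := dotProduct_comm _ _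
  rw [h4, h5, h1, h2] at h3
  linarith

variable [DecidableEq m']

private lemma obl_eig_eq {H : Matrix m' m' ℝ} (hH : H.IsHermitian) (i : m') :
    hH.eigenvalues i = ⇑(hH.eigenvectorBasis i) ⬝ᵥ H *ᵥ ⇑(hH.eigenvectorBasis i) := by
  rw [hH.eigenvalues_eq i]
  simp

private lemma obl_eigvec_unit {H : Matrix m' m' ℝ} (hH : H.IsHermitian) (i : m') :
    ⇑(hH.eigenvectorBasis i) ⬝ᵥ ⇑(hH.eigenvectorBasis i) = 1 := by
  have h2 : (inner ℝ (hH.eigenvectorBasis i) (hH.eigenvectorBasis i) : ℝ) = 1 := by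
    rw [orthonormal_iff_ite.mp hH.eigenvectorBasis.orthonormal]; simp
  rw [PiLp.inner_apply] at h2
  simpa only [dotProduct, RCLike.inner_apply, conj_trivial, mul_comm] using h2

private lemma obl_dot_AAH_nonneg (A : Matrix m' n' ℝ) (x : m' → ℝ) :
    0 ≤ x ⬝ᵥ (A * Aᴴ) *ᵥ x := by
  rw [conjTranspose_eq_transpose_of_trivial, obl_dot_AAt]
  exact obl_dot_self_nonneg _

private lemma obl_eig_nonneg {A : Matrix m' n' ℝ}
    (hH : (A * Aᴴ).IsHermitian) (i : m') : 0 ≤ hH.eigenvalues i := by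
  rw [obl_eig_eq hH i]
  exact obl_dot_AAH_nonneg A _

private lemma obl_rayleigh_upper {H : Matrix m' m' ℝ} (hH : H.IsHermitian) {μ : ℝ}
    (hev : ∀ i, hH.eigenvalues i ≤ μ) (x : m' → ℝ) :
    x ⬝ᵥ H *ᵥ x ≤ μ * (x ⬝ᵥ x) := by
  set U : Matrix m' m' ℝ := (hH.eigenvectorUnitary : Matrix m' m' ℝ) with hUdef
  have hstar : (star U : Matrix m' m' ℝ) = Uᵀ := by
    rw [Matrix.star_eq_conjTranspose, conjTranspose_eq_transpose_of_trivial]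
  have hUU : U * Uᵀ = 1 := by
    rw [← hstar]
    exact (Matrix.mem_unitaryGroup_iff).mp hH.eigenvectorUnitary.2
  have hspec : H = U * Matrix.diagonal hH.eigenvalues * Uᵀ := by
    have h := hH.spectral_theorem
    rw [← hstar]
    simpa using h
  rw [hspec, obl_conj_dot]
  set y := Uᵀ *ᵥ x with hy
  have hyy : y ⬝ᵥ y = x ⬝ᵥ x := by
    rw [hy, ← obl_dot_AAt, hUU, one_mulVec]
  have hterm : y ⬝ᵥ (Matrix.diagonal hH.eigenvalues) *ᵥ y
      = ∑ i, hH.eigenvalues i * (y i) ^ 2 := by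
    simp only [dotProduct, mulVec_diagonal]
    exact Finset.sum_congr rfl fun i _ => by ring
  rw [hterm, ← hyy]
  have hyy2 : y ⬝ᵥ y = ∑ i, (y i) ^ 2 := by
    simp only [dotProduct]
    exact Finset.sum_congr rfl fun i _ => by ring
  rw [hyy2, Finset.mul_sum]
  exact Finset.sum_le_sum fun i _ =>
    mul_le_mul_of_nonneg_right (hev i) (sq_nonneg _)

private lemma obl_sorted_top {k : ℕ} (hk : 0 < k) (ev : Fin k → ℝ)
    (hne : (Finset.univ : Finset (Fin k)).Nonempty) :
    (ev ∘ Tuple.sort ev) ⟨k - 1, by omega⟩ = Finset.univ.sup' hne ev := by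
  apply le_antisymm
  · exact Finset.le_sup' ev (Finset.mem_univ _)
  · apply Finset.sup'_le
    intro i _
    have h1 : ev i = (ev ∘ Tuple.sort ev) ((Tuple.sort ev).symm i) := by simp
    have hlt := ((Tuple.sort ev).symm i).isLt
    rw [h1]
    exact Tuple.monotone_sort ev (Fin.le_def.mpr (by simp only []; omega))

private lemma obl_specNorm_eq_sup [Nonempty m'] (A : Matrix m' n' ℝ) :
    specNorm A = Real.sqrt (Finset.univ.sup' Finset.univ_nonempty
      (Matrix.isHermitian_mul_conjTranspose_self A).eigenvalues) := by
  have hc : 0 < Fintype.card m' := Fintype.card_pos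
  unfold specNorm singularValues
  rw [dif_pos hc]
  set eig := (Matrix.isHermitian_mul_conjTranspose_self A).eigenvalues with heig
  set e := Fintype.equivFin m' with he
  have hne : (Finset.univ : Finset (Fin (Fintype.card m'))).Nonempty :=
    ⟨⟨0, hc⟩, Finset.mem_univ _⟩
  have h1 : (⟨Fintype.card m' - 1 - 0, by omega⟩ : Fin (Fintype.card m'))
      = ⟨Fintype.card m' - 1, by omega⟩ := by simp
  rw [h1]
  show Real.sqrt (((eig ∘ ⇑e.symm) ∘ ⇑(Tuple.sort (eig ∘ ⇑e.symm)))
      ⟨Fintype.card m' - 1, by omega⟩)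
      = Real.sqrt (Finset.univ.sup' Finset.univ_nonempty eig)
  rw [obl_sorted_top hc (eig ∘ e.symm) hne]
  congr 1
  apply le_antisymm
  · exact Finset.sup'_le _ _ fun i _ => Finset.le_sup' _ (Finset.mem_univ (e.symm i))
  · refine Finset.sup'_le _ _ fun i _ => ?_
    have h2 : eig i = (eig ∘ e.symm) (e i) := by simp
    rw [h2]
    exact Finset.le_sup' _ (Finset.mem_univ _)

private lemma obl_specNorm_zero : specNorm (0 : Matrix m' n' ℝ) = 0 := by
  unfold specNorm singularValues
  split
  · next h =>
    have hz : ∀ jj, (Matrix.isHermitian_mul_conjTranspose_self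
        (0 : Matrix m' n' ℝ)).eigenvalues jj = 0 := fun jj => by
      rw [obl_eig_eq]
      simp
    simp only [Function.comp_def]
    rw [hz, Real.sqrt_zero]
  · rfl

end ObliqueHelpers

/-- for `Q` with orthonormal columns and a selection operator `P` with
`PᵀQ` invertible, the oblique projector `Π = Q(PᵀQ)⁻¹Pᵀ` satisfies
`‖Π‖₂ = ‖(PᵀQ)⁻¹‖₂`. -/
theorem oblique_projector_spectral_norm
    (I ℓ : ℕ) (Q : Matrix (Fin I) (Fin ℓ) ℝ) (P : Matrix (Fin I) (Fin ℓ) ℝ)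
    (hQ : Qᵀ * Q = 1) (hP : IsSelection P) (hinv : IsUnit (Pᵀ * Q)) :
    specNorm (Q * (Pᵀ * Q)⁻¹ * Pᵀ) = specNorm (Pᵀ * Q)⁻¹ := by
  classical
  obtain ⟨f, hf, hPf⟩ := hP
  have hPtP : Pᵀ * P = (1 : Matrix (Fin ℓ) (Fin ℓ) ℝ) := by
    ext a b
    simp only [Matrix.mul_apply, Matrix.transpose_apply, hPf, Matrix.one_apply,
      ite_mul, one_mul, zero_mul]
    rw [Finset.sum_ite_eq' Finset.univ (f a) (fun i => if i = f b then (1:ℝ) else 0)]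
    simp [hf.eq_iff]
  set B : Matrix (Fin ℓ) (Fin ℓ) ℝ := (Pᵀ * Q)⁻¹ with hB
  have hPP : (Q * B * Pᵀ) * (Q * B * Pᵀ)ᴴ = Q * (B * Bᴴ) * Qᵀ := by
    simp only [Matrix.conjTranspose_eq_transpose_of_trivial, Matrix.transpose_mul,
      Matrix.transpose_transpose, Matrix.mul_assoc]
    rw [← Matrix.mul_assoc Pᵀ P (Bᵀ * Qᵀ), hPtP, Matrix.one_mul]
  rcases Nat.eq_zero_or_pos ℓ with hl | hl
  · subst hl
    have hzero : Q * B * Pᵀ = 0 := by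
      ext a b
      simp [Matrix.mul_apply]
    rw [hzero]
    have h2 : specNorm B = 0 := by
      unfold specNorm singularValues
      rw [dif_neg (by simp)]
    rw [h2, obl_specNorm_zero]
  · have hI0 : 0 < I := by
      rcases Nat.eq_zero_or_pos I with h0 | h
      · exfalso
        have h1 := congrFun (congrFun hQ ⟨0, hl⟩) ⟨0, hl⟩
        subst h0
        simp [Matrix.mul_apply, Matrix.one_apply] at h1
      · exact h
    haveI : Nonempty (Fin I) := ⟨⟨0, hI0⟩⟩
    haveI : Nonempty (Fin ℓ) := ⟨⟨0, hl⟩⟩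
    rw [obl_specNorm_eq_sup (Q * B * Pᵀ), obl_specNorm_eq_sup B]
    have hHerm := Matrix.isHermitian_mul_conjTranspose_self (Q * B * Pᵀ)
    have hM := Matrix.isHermitian_mul_conjTranspose_self B
    have hevM : ∀ i, hM.eigenvalues i ≤ Finset.univ.sup' Finset.univ_nonempty hM.eigenvalues :=
      fun i => Finset.le_sup' _ (Finset.mem_univ i)
    have hevH : ∀ i, hHerm.eigenvalues i
        ≤ Finset.univ.sup' Finset.univ_nonempty hHerm.eigenvalues :=
      fun i => Finset.le_sup' _ (Finset.mem_univ i)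
    have hμ0 : 0 ≤ Finset.univ.sup' Finset.univ_nonempty hM.eigenvalues :=
      le_trans (obl_eig_nonneg hM (Classical.arbitrary _)) (hevM _)
    congr 1
    apply le_antisymm
    · apply Finset.sup'_le
      intro i _
      set w := ⇑(hHerm.eigenvectorBasis i) with hw
      have hval : hHerm.eigenvalues i
          = w ⬝ᵥ ((Q * B * Pᵀ) * (Q * B * Pᵀ)ᴴ) *ᵥ w := obl_eig_eq hHerm i
      have hunit : w ⬝ᵥ w = 1 := obl_eigvec_unit hHerm i
      clear_value w
      rw [hval, hPP, obl_conj_dot]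
      calc (Qᵀ *ᵥ w) ⬝ᵥ (B * Bᴴ) *ᵥ (Qᵀ *ᵥ w)
          ≤ (Finset.univ.sup' Finset.univ_nonempty hM.eigenvalues)
            * ((Qᵀ *ᵥ w) ⬝ᵥ (Qᵀ *ᵥ w)) :=
            obl_rayleigh_upper hM hevM _
        _ ≤ (Finset.univ.sup' Finset.univ_nonempty hM.eigenvalues) * (w ⬝ᵥ w) :=
            mul_le_mul_of_nonneg_left (obl_sel_contract Q hQ _) hμ0
        _ = Finset.univ.sup' Finset.univ_nonempty hM.eigenvalues := by
            rw [hunit, mul_one]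
    · obtain ⟨j, _, hj⟩ := Finset.exists_mem_eq_sup' Finset.univ_nonempty hM.eigenvalues
      set v := ⇑(hM.eigenvectorBasis j) with hv
      set x := Q *ᵥ v with hx
      have hxx : x ⬝ᵥ x = 1 := by
        rw [hx, obl_dot_mulVec_self, hQ, one_mulVec]
        exact obl_eigvec_unit hM j
      have hQx : Qᵀ *ᵥ x = v := by
        rw [hx, Matrix.mulVec_mulVec, hQ, one_mulVec]
      have h2 : x ⬝ᵥ ((Q * B * Pᵀ) * (Q * B * Pᵀ)ᴴ) *ᵥ x = hM.eigenvalues j := by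
        rw [hPP, obl_conj_dot, hQx, ← obl_eig_eq hM j]
      have h3 := obl_rayleigh_upper hHerm hevH x
      rw [h2, hxx, mul_one] at h3
      rw [hj]
      exact h3
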